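/- Let G=(V,E) with edge probabilities p(e)∈[0,1] and q≥1. Colour each connected component of a sample A from the random cluster distribution RC(G;q,p) red independently with probability r, green otherwise, and let R be the union of red components. Then conditioned on R=V₁, the red subgraph is distributed as RC(G[V₁];rq,p), the green subgraph as RC(G[V∖V₁];(1-r)q,p), and they are conditionally independent. -/

import Mathlib

open scoped Classical

/-- Number of connected components of the graph `(V, F)`. -/
noncomputable def kappa {V : Type*} [Fintype V] (F : Finset (Finset V)) : ℕ :=
  Nat.card (Quotient (Relation.EqvGen.setoid (fun u v : V => ∃ f ∈ F, u ∈ f ∧ v ∈ f)))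

/-- Number of connected components of the graph `(S, F)` on the vertex set `S`. -/
noncomputable def kappaOn {V : Type*} (S : Finset V) (F : Finset (Finset V)) : ℕ :=
  Nat.card (Quotient (Relation.EqvGen.setoid
    (fun u v : {x : V // x ∈ S} => ∃ f ∈ F, u.1 ∈ f ∧ v.1 ∈ f)))

open Relation

lemma kappa_split {V : Type*} [Fintype V] [DecidableEq V]
    (V₁ : Finset V) (B₁ B₂ : Finset (Finset V))
    (h₁ : ∀ f ∈ B₁, f ⊆ V₁) (h₂ : ∀ f ∈ B₂, f ⊆ V₁ᶜ) :
    kappa (B₁ ∪ B₂) = kappaOn V₁ B₁ + kappaOn V₁ᶜ B₂ := by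
  classical
  let R : V → V → Prop := fun u v => ∃ f ∈ B₁ ∪ B₂, u ∈ f ∧ v ∈ f
  let R₁ : {x : V // x ∈ V₁} → {x : V // x ∈ V₁} → Prop :=
    fun u v => ∃ f ∈ B₁, u.1 ∈ f ∧ v.1 ∈ f
  let R₂ : {x : V // x ∈ V₁ᶜ} → {x : V // x ∈ V₁ᶜ} → Prop :=
    fun u v => ∃ f ∈ B₂, u.1 ∈ f ∧ v.1 ∈ f
  let Q := Quotient (EqvGen.setoid R)
  let Q₁ := Quotient (EqvGen.setoid R₁)
  let Q₂ := Quotient (EqvGen.setoid R₂)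
  let g : V → Q₁ ⊕ Q₂ := fun x =>
    if h : x ∈ V₁ then Sum.inl (Quotient.mk _ ⟨x, h⟩)
    else Sum.inr (Quotient.mk _ ⟨x, by simpa using h⟩)
  have hg : ∀ u v, EqvGen R u v → g u = g v := by
    intro u v h
    induction h with
    | rel u v huv =>
      obtain ⟨f, hf, hu, hv⟩ := huv
      rcases Finset.mem_union.1 hf with hf | hf
      · have hu1 := h₁ f hf hu
        have hv1 := h₁ f hf hv
        simp only [g, dif_pos hu1, dif_pos hv1]
        exact congrArg Sum.inl (Quotient.sound (EqvGen.rel _ _ ⟨f, hf, hu, hv⟩))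
      · have hu1 := h₂ f hf hu
        have hv1 := h₂ f hf hv
        have hu2 : u ∉ V₁ := by simpa using hu1
        have hv2 : v ∉ V₁ := by simpa using hv1
        simp only [g, dif_neg hu2, dif_neg hv2]
        exact congrArg Sum.inr (Quotient.sound (EqvGen.rel _ _ ⟨f, hf, hu, hv⟩))
    | refl => rfl
    | symm _ _ _ ih => exact ih.symm
    | trans _ _ _ _ _ ih1 ih2 => exact ih1.trans ih2
  have mono1 : ∀ (u v : {x : V // x ∈ V₁}), EqvGen R₁ u v →
      (Quotient.mk (EqvGen.setoid R) u.1 : Q) = Quotient.mk _ v.1 := by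
    intro u v h
    induction h with
    | rel a b hab =>
      obtain ⟨f, hf, ha, hb⟩ := hab
      exact Quotient.sound (EqvGen.rel _ _ ⟨f, Finset.mem_union_left _ hf, ha, hb⟩)
    | refl => rfl
    | symm _ _ _ ih => exact ih.symm
    | trans _ _ _ _ _ ih1 ih2 => exact ih1.trans ih2
  have mono2 : ∀ (u v : {x : V // x ∈ V₁ᶜ}), EqvGen R₂ u v →
      (Quotient.mk (EqvGen.setoid R) u.1 : Q) = Quotient.mk _ v.1 := by
    intro u v h
    induction h with
    | rel a b hab =>
      obtain ⟨f, hf, ha, hb⟩ := hab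
      exact Quotient.sound (EqvGen.rel _ _ ⟨f, Finset.mem_union_right _ hf, ha, hb⟩)
    | refl => rfl
    | symm _ _ _ ih => exact ih.symm
    | trans _ _ _ _ _ ih1 ih2 => exact ih1.trans ih2
  let e : Q ≃ Q₁ ⊕ Q₂ :=
    { toFun := Quotient.lift g hg
      invFun := Sum.elim (Quotient.lift (fun u => Quotient.mk _ u.1) mono1)
        (Quotient.lift (fun u => Quotient.mk _ u.1) mono2)
      left_inv := by
        refine Quotient.ind (fun x => ?_)
        by_cases h : x ∈ V₁
        · simp only [Quotient.lift_mk, g, dif_pos h, Sum.elim_inl]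
        · simp only [Quotient.lift_mk, g, dif_neg h, Sum.elim_inr]
      right_inv := by
        rintro (x | x)
        · obtain ⟨u⟩ := x
          show g u.1 = Sum.inl ⟦u⟧
          exact dif_pos u.2
        · obtain ⟨u⟩ := x
          show g u.1 = Sum.inr ⟦u⟧
          exact dif_neg (Finset.mem_compl.1 u.2) }
  have h := Nat.card_congr e
  rw [Nat.card_sum] at h
  exact h

/-- Fundamental Lemma (Bollobás–Grimmett–Jansen): colouring the components of
a random cluster sample red with probability `r` and green otherwise, and
conditioning on the red vertex set being `V₁`, the red subgraph is distributed
as `RC(G[V₁];rq,p)`, the green subgraph as `RC(G[V₁ᶜ];(1-r)q,p)`, and they are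
conditionally independent. -/
theorem fundamental_lemma {V : Type*} [Fintype V] [DecidableEq V]
    (E : Finset (Finset V)) (hE : ∀ e ∈ E, e.card = 2)
    (p : Finset V → ℝ) (hp : ∀ e ∈ E, 0 ≤ p e ∧ p e ≤ 1)
    (q r : ℝ) (hq : 1 ≤ q) (hr0 : 0 < r) (hr1 : r < 1)
    (V₁ : Finset V) :
    let V₂ : Finset V := V₁ᶜ
    let E₁ : Finset (Finset V) := E.filter (fun e => e ⊆ V₁)
    let E₂ : Finset (Finset V) := E.filter (fun e => e ⊆ V₂)
    let Pt : Finset (Finset V) → ℝ := fun A =>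
      q ^ kappa A * (∏ e ∈ A, p e) * ∏ e ∈ E \ A, (1 - p e)
    -- conditioning on `R = V₁` is non-degenerate:
    (0 < ∑ B₁ ∈ E₁.powerset, ∑ B₂ ∈ E₂.powerset,
        Pt (B₁ ∪ B₂) * r ^ kappaOn V₁ B₁ * (1 - r) ^ kappaOn V₂ B₂) →
    ∀ A₁ ∈ E₁.powerset, ∀ A₂ ∈ E₂.powerset,
      (Pt (A₁ ∪ A₂) * r ^ kappaOn V₁ A₁ * (1 - r) ^ kappaOn V₂ A₂) /
          (∑ B₁ ∈ E₁.powerset, ∑ B₂ ∈ E₂.powerset,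
            Pt (B₁ ∪ B₂) * r ^ kappaOn V₁ B₁ * (1 - r) ^ kappaOn V₂ B₂)
        = ((r * q) ^ kappaOn V₁ A₁ * (∏ e ∈ A₁, p e) * ∏ e ∈ E₁ \ A₁, (1 - p e)) /
              (∑ B ∈ E₁.powerset,
                (r * q) ^ kappaOn V₁ B * (∏ e ∈ B, p e) * ∏ e ∈ E₁ \ B, (1 - p e))
            * (((1 - r) * q) ^ kappaOn V₂ A₂ * (∏ e ∈ A₂, p e) *
                  ∏ e ∈ E₂ \ A₂, (1 - p e)) /
              (∑ B ∈ E₂.powerset,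
                ((1 - r) * q) ^ kappaOn V₂ B * (∏ e ∈ B, p e) * ∏ e ∈ E₂ \ B, (1 - p e)) := by
  intro V₂ E₁ E₂ Pt
  -- basic subset facts
  have hE₁E : E₁ ⊆ E := Finset.filter_subset _ _
  have hE₂E : E₂ ⊆ E := Finset.filter_subset _ _
  have hE₁V : ∀ f ∈ E₁, f ⊆ V₁ := fun f hf => (Finset.mem_filter.1 hf).2
  have hE₂V : ∀ f ∈ E₂, f ⊆ V₁ᶜ := fun f hf => (Finset.mem_filter.1 hf).2
  have hdisjE : Disjoint E₁ E₂ := by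
    rw [Finset.disjoint_left]
    intro e he1 he2
    have h1 : e ⊆ V₁ := hE₁V e he1
    have h2 : e ⊆ V₁ᶜ := hE₂V e he2
    have : e = ∅ := by
      rw [Finset.eq_empty_iff_forall_notMem]
      intro x hx
      exact (Finset.mem_compl.1 (h2 hx)) (h1 hx)
    have h2card := hE e (hE₁E he1)
    rw [this] at h2card
    simp at h2card
  set C : ℝ := ∏ e ∈ E \ (E₁ ∪ E₂), (1 - p e) with hC
  -- key term identity
  have hterm : ∀ B₁ ∈ E₁.powerset, ∀ B₂ ∈ E₂.powerset,
      Pt (B₁ ∪ B₂) * r ^ kappaOn V₁ B₁ * (1 - r) ^ kappaOn V₂ B₂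
        = C * ((r * q) ^ kappaOn V₁ B₁ * (∏ e ∈ B₁, p e) * ∏ e ∈ E₁ \ B₁, (1 - p e))
            * (((1 - r) * q) ^ kappaOn V₂ B₂ * (∏ e ∈ B₂, p e) *
                ∏ e ∈ E₂ \ B₂, (1 - p e)) := by
    intro B₁ hB₁ B₂ hB₂
    rw [Finset.mem_powerset] at hB₁ hB₂
    have h₁ : ∀ f ∈ B₁, f ⊆ V₁ := fun f hf => hE₁V f (hB₁ hf)
    have h₂ : ∀ f ∈ B₂, f ⊆ V₁ᶜ := fun f hf => hE₂V f (hB₂ hf)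
    have hκ : kappa (B₁ ∪ B₂) = kappaOn V₁ B₁ + kappaOn V₂ B₂ :=
      kappa_split V₁ B₁ B₂ h₁ h₂
    have hdis : Disjoint B₁ B₂ := hdisjE.mono hB₁ hB₂
    have hsd : E \ (B₁ ∪ B₂) = (E₁ \ B₁) ∪ ((E₂ \ B₂) ∪ (E \ (E₁ ∪ E₂))) := by
      ext e
      simp only [Finset.mem_sdiff, Finset.mem_union]
      constructor
      · rintro ⟨he, hn⟩
        push_neg at hn
        obtain ⟨hn1, hn2⟩ := hn
        by_cases h1 : e ∈ E₁
        · exact Or.inl ⟨h1, hn1⟩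
        · by_cases h2 : e ∈ E₂
          · exact Or.inr (Or.inl ⟨h2, hn2⟩)
          · exact Or.inr (Or.inr ⟨he, fun h => h.elim h1 h2⟩)
      · rintro (⟨h1, h2⟩ | ⟨h1, h2⟩ | ⟨h1, h2⟩)
        · exact ⟨hE₁E h1, fun h => h.elim h2
            (fun hb => Finset.disjoint_left.1 hdisjE h1 (hB₂ hb))⟩
        · exact ⟨hE₂E h1, fun h => h.elim
            (fun hb => Finset.disjoint_left.1 hdisjE (hB₁ hb) h1) h2⟩
        · exact ⟨h1, fun h => h2 (h.elim (fun hb => Or.inl (hB₁ hb))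
            (fun hb => Or.inr (hB₂ hb)))⟩
    have d2 : Disjoint (E₂ \ B₂) (E \ (E₁ ∪ E₂)) := by
      rw [Finset.disjoint_left]
      intro e he1 he2
      exact (Finset.mem_sdiff.1 he2).2 (Finset.mem_union.2 (Or.inr (Finset.mem_sdiff.1 he1).1))
    have d1 : Disjoint (E₁ \ B₁) ((E₂ \ B₂) ∪ (E \ (E₁ ∪ E₂))) := by
      rw [Finset.disjoint_left]
      intro e he1 he2
      have he1' := (Finset.mem_sdiff.1 he1).1
      rcases Finset.mem_union.1 he2 with h | h
      · exact Finset.disjoint_left.1 hdisjE he1' (Finset.mem_sdiff.1 h).1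
      · exact (Finset.mem_sdiff.1 h).2 (Finset.mem_union.2 (Or.inl he1'))
    show q ^ kappa (B₁ ∪ B₂) * (∏ e ∈ B₁ ∪ B₂, p e) * (∏ e ∈ E \ (B₁ ∪ B₂), (1 - p e))
        * r ^ kappaOn V₁ B₁ * (1 - r) ^ kappaOn V₂ B₂ = _
    rw [hκ, Finset.prod_union hdis, hsd, Finset.prod_union d1, Finset.prod_union d2,
      pow_add, mul_pow, mul_pow]
    ring
  -- the double sum factors
  have hsum : (∑ B₁ ∈ E₁.powerset, ∑ B₂ ∈ E₂.powerset,
        Pt (B₁ ∪ B₂) * r ^ kappaOn V₁ B₁ * (1 - r) ^ kappaOn V₂ B₂)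
      = C * (∑ B ∈ E₁.powerset,
            (r * q) ^ kappaOn V₁ B * (∏ e ∈ B, p e) * ∏ e ∈ E₁ \ B, (1 - p e))
          * (∑ B ∈ E₂.powerset,
            ((1 - r) * q) ^ kappaOn V₂ B * (∏ e ∈ B, p e) * ∏ e ∈ E₂ \ B, (1 - p e)) := by
    rw [mul_assoc, Finset.sum_mul_sum, Finset.mul_sum]
    refine Finset.sum_congr rfl fun B₁ h1 => ?_
    rw [Finset.mul_sum]
    refine Finset.sum_congr rfl fun B₂ h2 => ?_
    rw [hterm B₁ h1 B₂ h2]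
    ring
  intro hpos A₁ hA₁ A₂ hA₂
  rw [hsum] at hpos ⊢
  rw [hterm A₁ hA₁ A₂ hA₂]
  have hCne : C ≠ 0 := by
    intro h; rw [h] at hpos; simp at hpos
  have hS₁ : (∑ B ∈ E₁.powerset,
      (r * q) ^ kappaOn V₁ B * (∏ e ∈ B, p e) * ∏ e ∈ E₁ \ B, (1 - p e)) ≠ 0 := by
    intro h; rw [h] at hpos; simp at hpos
  have hS₂ : (∑ B ∈ E₂.powerset,
      ((1 - r) * q) ^ kappaOn V₂ B * (∏ e ∈ B, p e) * ∏ e ∈ E₂ \ B, (1 - p e)) ≠ 0 := by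
    intro h; rw [h] at hpos; simp at hpos
  field_simp
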